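/- Let Z be a set of complex numbers that is closed under multiplication by i, by −1, and by −i, and such that no element of Z is real or purely imaginary (in particular 0 ∉ Z, and for every real r, neither r nor r·i belongs to Z). Set X = {1, −1, i, −i} and Y = {z ∈ Z : Re z > 0 and Im z > 0}. Then (X, Y) is a uniquely factorable constellation pair and {y/x : x ∈ X, y ∈ Y} = Z. -/

import Mathlib

/-- A pair `(X, Y)` of sets of complex numbers is a uniquely factorable
constellation pair (UFCP) if `x * y' = x' * y` with `x, x' ∈ X` and
`y, y' ∈ Y` implies `x = x'` and `y = y'`. -/
def IsUFCP (X Y : Set ℂ) : Prop :=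
  ∀ x ∈ X, ∀ x' ∈ X, ∀ y ∈ Y, ∀ y' ∈ Y, x * y' = x' * y → x = x' ∧ y = y'

/-- If `Z ⊆ ℂ` is closed under multiplication by `i`, `-1` and `-i`, and
contains no real and no purely imaginary number, then with
`X = {1, -1, i, -i}` and `Y` the points of `Z` in the open first quadrant,
`(X, Y)` is a UFCP and `{y/x : x ∈ X, y ∈ Y} = Z`. -/
theorem ufcp_of_rotation_invariant_four (Z : Set ℂ)
    (hI : ∀ z ∈ Z, z * Complex.I ∈ Z)
    (hneg : ∀ z ∈ Z, z * (-1) ∈ Z)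
    (hnegI : ∀ z ∈ Z, z * (-Complex.I) ∈ Z)
    (hreal : ∀ r : ℝ, (r : ℂ) ∉ Z ∧ (r : ℂ) * Complex.I ∉ Z) :
    IsUFCP ({1, -1, Complex.I, -Complex.I} : Set ℂ)
        {z ∈ Z | 0 < z.re ∧ 0 < z.im} ∧
      {w : ℂ | ∃ x ∈ ({1, -1, Complex.I, -Complex.I} : Set ℂ),
          ∃ y ∈ {z ∈ Z | 0 < z.re ∧ 0 < z.im}, w = y / x} = Z := by
  constructor
  · intro x hx x' hx' y hy y' hy' heq
    obtain ⟨hyZ, hyre, hyim⟩ := hy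
    obtain ⟨hy'Z, hy're, hy'im⟩ := hy'
    simp only [Set.mem_insert_iff, Set.mem_singleton_iff] at hx hx'
    have h1 := congrArg Complex.re heq
    have h2 := congrArg Complex.im heq
    rcases hx with rfl | rfl | rfl | rfl <;> rcases hx' with rfl | rfl | rfl | rfl <;>
      simp only [Complex.mul_re, Complex.mul_im, Complex.one_re, Complex.one_im,
        Complex.neg_re, Complex.neg_im, Complex.I_re, Complex.I_im] at h1 h2 <;>
      exact ⟨by first | rfl | (exfalso; nlinarith), Complex.ext (by nlinarith) (by nlinarith)⟩
  · ext z
    constructor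
    · rintro ⟨x, hx, y, ⟨hyZ, hyre, hyim⟩, rfl⟩
      simp only [Set.mem_insert_iff, Set.mem_singleton_iff] at hx
      rcases hx with rfl | rfl | rfl | rfl
      · simpa using hyZ
      · have : y / (-1 : ℂ) = y * (-1) := by ring
        rw [this]; exact hneg y hyZ
      · have : y / Complex.I = y * (-Complex.I) := by
          field_simp
          rw [Complex.I_sq]; ring
        rw [this]; exact hnegI y hyZ
      · have : y / (-Complex.I) = y * Complex.I := by
          rw [div_neg, div_eq_mul_inv, Complex.inv_I]; ring
        rw [this]; exact hI y hyZ
    · intro hz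
      have hre : z.re ≠ 0 := by
        intro h
        exact (hreal z.im).2 (by rw [show (z.im : ℂ) * Complex.I = z by
          apply Complex.ext <;> simp [h]] ; exact hz)
      have him : z.im ≠ 0 := by
        intro h
        exact (hreal z.re).1 (by rw [show (z.re : ℂ) = z by
          apply Complex.ext <;> simp [h]] ; exact hz)
      rcases hre.lt_or_gt with hre | hre <;> rcases him.lt_or_gt with him | him
      · -- re<0, im<0 : y = -z, x = -1
        refine ⟨-1, by simp, z * (-1), ⟨hneg z hz, by simpa using hre, by simpa using him⟩, by ring⟩
      · -- re<0, im>0 : y = z*(-I), x = -I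
        refine ⟨-Complex.I, by simp, z * (-Complex.I),
          ⟨hnegI z hz, by simp [Complex.mul_re, Complex.mul_im]; linarith,
            by simp [Complex.mul_re, Complex.mul_im]; linarith⟩, ?_⟩
        field_simp
      · -- re>0, im<0 : y = z*I, x = I
        refine ⟨Complex.I, by simp, z * Complex.I,
          ⟨hI z hz, by simp [Complex.mul_re, Complex.mul_im]; linarith,
            by simp [Complex.mul_re, Complex.mul_im]; linarith⟩, ?_⟩
        field_simp
      · refine ⟨1, by simp, z, ⟨hz, hre, him⟩, by simp⟩
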